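/- In Example 5.3's self-similar ultragraph (ℤ, U, φ), suppose n ∈ ℤ \ {0} satisfies n·x = x for all infinite paths x with r(x) = {v₀}. Then writing t = ½(φ(1,e₀)+φ(1,e₁)), for every path α of length k ≥ 1 with r(α) ∈ {{v₀},{v₁}} consisting of edges in {e₀,e₁}, one has φ(n, α) = n·t^k. -/

import Mathlib

/-- The vertices `v₀, v₁, w` of the ultragraph of Example 5.3. -/
inductive Vx | v0 | v1 | w
deriving DecidableEq

/-- The edges `e₀, e₁, f` of the ultragraph of Example 5.3. -/
inductive Ed | e0 | e1 | f
deriving DecidableEq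

/-- Range map: `r(e₀) = {v₀}`, `r(e₁) = {v₁}`, `r(f) = {w}`. -/
def rE : Ed → Vx
  | .e0 => .v0
  | .e1 => .v1
  | .f => .w

/-- Source map: `s(e₀) = s(e₁) = s(f) = {v₀, v₁}`. -/
def sE : Ed → Set Vx
  | .e0 => {Vx.v0, Vx.v1}
  | .e1 => {Vx.v0, Vx.v1}
  | .f => {Vx.v0, Vx.v1}

/-- The `ℤ`-action on vertices: `n·v₀ = v_{[n]₂}`, `n·v₁ = v_{[n+1]₂}`, `n·w = w`. -/
def actVx (n : ℤ) : Vx → Vx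
  | .v0 => if Even n then .v0 else .v1
  | .v1 => if Even n then .v1 else .v0
  | .w => .w

/-- The `ℤ`-action on edges: `n·e₀ = e_{[n]₂}`, `n·e₁ = e_{[n+1]₂}`, `n·f = f`. -/
def actEd (n : ℤ) : Ed → Ed
  | .e0 => if Even n then .e0 else .e1
  | .e1 => if Even n then .e1 else .e0
  | .f => .f

/-- The cocycle extended to finite paths: `φ(g, eα) = φ(φ(g,e), α)`. -/
def cocP (φ : ℤ → Ed → ℤ) : ℤ → List Ed → ℤ
  | g, [] => g
  | g, e :: l => cocP φ (φ g e) l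

/-- Example 5.3: suppose `n ≠ 0` satisfies `n·x = x` for all infinite paths `x` with
`r(x) = {v₀}`. Writing `t = ½(φ(1,e₀) + φ(1,e₁))`, for every path `α` of length
`k ≥ 1` consisting of edges in `{e₀, e₁}` (so `r(α) ∈ {{v₀},{v₁}}`), one has
`φ(n, α) = n·tᵏ`. -/
theorem ex53_cocycle_on_paths (φ : ℤ → Ed → ℤ)
    (hcoc : ∀ m n e, φ (m + n) e = φ m (actEd n e) + φ n e)
    (hres : ∀ n e, actVx (φ n e) '' sE e ⊆ actVx n '' sE e)
    (n : ℤ) (hn : n ≠ 0)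
    (hfix : ∀ x : ℕ → Ed, (∀ k, rE (x (k + 1)) ∈ sE (x k)) → rE (x 0) = Vx.v0 →
      ∀ gs : ℕ → ℤ, gs 0 = n → (∀ k, gs (k + 1) = φ (gs k) (x k)) →
        ∀ k, actEd (gs k) (x k) = x k)
    (t : ℤ) (ht : 2 * t = φ 1 Ed.e0 + φ 1 Ed.e1) :
    ∀ α : List Ed, α ≠ [] → List.Chain' (fun e e' => rE e' ∈ sE e) α →
      (∀ e ∈ α, e ≠ Ed.f) → cocP φ n α = n * t ^ α.length := by
  -- φ 0 e = 0
  have h0 : ∀ e, φ 0 e = 0 := by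
    intro e
    have h := hcoc 0 0 e
    have hact : actEd 0 e = e := by cases e <;> simp [actEd]
    rw [hact] at h
    norm_num at h
    omega
  have phi2 : ∀ e, e ≠ Ed.f → φ 2 e = 2 * t := by
    intro e he
    have h := hcoc 1 1 e
    cases e with
    | e0 =>
      have ha : actEd 1 Ed.e0 = Ed.e1 := by simp [actEd, Int.even_iff]
      rw [ha] at h; norm_num at h; omega
    | e1 =>
      have ha : actEd 1 Ed.e1 = Ed.e0 := by simp [actEd, Int.even_iff]
      rw [ha] at h; norm_num at h; omega
    | f => exact absurd rfl he
  have phiadd2 : ∀ m e, e ≠ Ed.f → φ (m + 2) e = φ m e + 2 * t := by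
    intro m e he
    have h := hcoc m 2 e
    have hact : actEd 2 e = e := by cases e <;> simp [actEd, Int.even_iff]
    rw [hact, phi2 e he] at h
    exact h
  have phi_even : ∀ m : ℤ, Even m → ∀ e, e ≠ Ed.f → φ m e = m * t := by
    have key : ∀ k : ℤ, ∀ e, e ≠ Ed.f → φ (2 * k) e = 2 * k * t := by
      intro k
      induction k using Int.induction_on with
      | zero => intro e he; simpa using h0 e
      | succ k ih =>
        intro e he
        have : (2 : ℤ) * (k + 1) = 2 * k + 2 := by ring
        rw [this, phiadd2 _ e he, ih e he]; ring
      | pred k ih =>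
        intro e he
        have h := phiadd2 (2 * (-(k:ℤ) - 1)) e he
        have h2 : (2 : ℤ) * (-(k:ℤ) - 1) + 2 = 2 * (-(k:ℤ)) := by ring
        rw [h2, ih e he] at h
        linear_combination -h
    intro m hm e he
    obtain ⟨k, hk⟩ := hm
    have : m = 2 * k := by omega
    rw [this]; exact key k e he
  -- n is even
  have hne : Even n := by
    have h := hfix (fun _ => Ed.e0) (fun k => by simp [rE, sE])
      rfl (fun k => Nat.rec n (fun _ g => φ g Ed.e0) k) rfl (fun k => rfl) 0
    change (if Even n then Ed.e0 else Ed.e1) = Ed.e0 at h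
    by_contra hc
    rw [if_neg hc] at h
    exact Ed.noConfusion h
  have key : ∀ l : List Ed, ∀ m : ℤ, Even m → (∀ e ∈ l, e ≠ Ed.f) →
      cocP φ m l = m * t ^ l.length := by
    intro l
    induction l with
    | nil => intro m _ _; simp [cocP]
    | cons e l ih =>
      intro m hm hl
      simp only [cocP]
      rw [phi_even m hm e (hl e (by simp)),
        ih (m * t) (hm.mul_right t) (fun x hx => hl x (by simp [hx]))]
      simp [pow_succ]; ring
  intro α _ _ hα
  exact key α n hne hα
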